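/- Let a > 0. Then for every ω ∈ ℝ, the Fourier transform of x ↦ sign(x)·e^{−ax²/2} satisfies ∫_ℝ sign(x)·e^{−ax²/2}·e^{−2πiωx} dx = −2i·√(2/a)·D(√2·πω/√a), where D is the Dawson function D(z) = e^{−z²}·∫₀^z e^{t²} dt; equivalently, the transform equals −2i·√(2/a)·e^{−2π²ω²/a}·∫₀^{√2πω/√a} e^{t²} dt. -/

import Mathlib

open MeasureTheory Real

/-- The Dawson function `D(z) = e^{-z²} ∫₀^z e^{t²} dt`. -/
noncomputable def dawson (z : ℝ) : ℝ :=
  Real.exp (-z ^ 2) * ∫ t in (0:ℝ)..z, Real.exp (t ^ 2)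

open Set Filter


noncomputable def Hfun (b : ℝ) : ℝ := ∫ x in Ioi (0:ℝ), Real.exp (-x^2) * Real.sin (2*b*x)

lemma intH (b : ℝ) : IntegrableOn (fun x => Real.exp (-x^2) * Real.sin (2*b*x)) (Ioi (0:ℝ)) := by
  have h0 : Integrable (fun x : ℝ => Real.exp (-1*x^2)) := integrable_exp_neg_mul_sq one_pos
  refine (h0.integrableOn.mono' ?_ ?_)
  · exact (Continuous.mul (by continuity) (by continuity)).aestronglyMeasurable
  · filter_upwards with x
    rw [Real.norm_eq_abs, abs_mul, abs_of_pos (Real.exp_pos _), neg_one_mul]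
    exact mul_le_of_le_one_right (Real.exp_pos _).le (abs_sin_le_one _)

lemma intBound : Integrable (fun x : ℝ => 2 * |x| *Real.exp (-x^2)) := by
  have h := ((integrable_rpow_mul_exp_neg_mul_sq (b := 1) one_pos (s := 1) (by norm_num)).abs).const_mul 2
  have e : ∀ x : ℝ, 2 * |x ^ (1:ℝ) * Real.exp (-1 * x ^ 2)| = 2 * |x| * Real.exp (-x^2) := by
    intro x
    rw [Real.rpow_one, abs_mul, abs_of_pos (Real.exp_pos _), neg_one_mul, mul_assoc]
  simpa only [e] using h

lemma intXcos (b : ℝ) :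
    IntegrableOn (fun x => Real.exp (-x^2) * (Real.cos (2*b*x) * (2*x))) (Ioi (0:ℝ)) := by
  refine intBound.integrableOn.mono' ?_ ?_
  · exact (Continuous.mul (by continuity) (by continuity)).aestronglyMeasurable
  · filter_upwards with x
    rw [Real.norm_eq_abs, abs_mul, abs_mul, abs_of_pos (Real.exp_pos _)]
    calc Real.exp (-x^2) * (|Real.cos (2*b*x)| * |2 * x|)
        ≤ Real.exp (-x^2) * (1 * |2 * x|) := by
          gcongr; exact abs_cos_le_one _
      _ = 2 * |x| *Real.exp (-x^2) := by rw [abs_mul]; simp [abs_of_nonneg]; ring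

lemma hasDerivAt_sin_aux (b x : ℝ) :
    HasDerivAt (fun b' => Real.exp (-x^2) * Real.sin (2*b'*x)) (Real.exp (-x^2) * (Real.cos (2*b*x) * (2*x))) b := by
  have h1 : HasDerivAt (fun b' : ℝ => 2*b'*x) (2*x) b := by
    simpa using ((hasDerivAt_id b).const_mul (2:ℝ)).mul_const x
  exact (h1.sin).const_mul _

lemma H_hasDeriv (b : ℝ) :
    HasDerivAt Hfun (∫ x in Ioi (0:ℝ), Real.exp (-x^2) * (Real.cos (2*b*x) * (2*x))) b := by
  have := hasDerivAt_integral_of_dominated_loc_of_deriv_le (μ := volume.restrict (Ioi (0:ℝ)))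
    (F := fun b' x => Real.exp (-x^2) * Real.sin (2*b'*x))
    (F' := fun b' x => Real.exp (-x^2) * (Real.cos (2*b'*x) * (2*x)))
    (x₀ := b) (s := Metric.ball b 1) (bound := fun x => 2 * |x| *Real.exp (-x^2)) (Metric.ball_mem_nhds b one_pos)
    ?_ (intH b) ?_ ?_ intBound.integrableOn ?_
  · exact this.2
  · filter_upwards with b'
    exact (Continuous.mul (by continuity) (by continuity)).aestronglyMeasurable
  · exact (Continuous.mul (by continuity) (by continuity)).aestronglyMeasurable
  · filter_upwards with x
    intro b' _
    rw [Real.norm_eq_abs, abs_mul, abs_mul, abs_of_pos (Real.exp_pos _)]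
    calc Real.exp (-x^2) * (|Real.cos (2*b'*x)| * |2 * x|)
        ≤ Real.exp (-x^2) * (1 * |2 * x|) := by gcongr; exact abs_cos_le_one _
      _ ≤ 2 * |x| *Real.exp (-x^2) := by rw [abs_mul]; simp [abs_of_nonneg]; ring_nf; exact le_refl _
  · filter_upwards with x
    intro b' _
    exact hasDerivAt_sin_aux b' x

lemma parts (b : ℝ) :
    ∫ x in Ioi (0:ℝ), (Real.exp (-x^2) * (Real.cos (2*b*x) * (2*x))
      + 2*b * (Real.exp (-x^2) * Real.sin (2*b*x))) = 1 := by
  have hderiv : ∀ x ∈ Ici (0:ℝ),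
      HasDerivAt (fun x => -(Real.exp (-x^2) * Real.cos (2*b*x)))
        (Real.exp (-x^2) * (Real.cos (2*b*x) * (2*x))
          + 2*b * (Real.exp (-x^2) * Real.sin (2*b*x))) x := by
    intro x _
    have h1 : HasDerivAt (fun x : ℝ => -x^2) (-(2*x)) x := by
      simpa using ((hasDerivAt_pow 2 x)).fun_neg
    have h2 : HasDerivAt (fun x : ℝ => Real.exp (-x^2)) (Real.exp (-x^2) * (-(2*x))) x := h1.exp
    have h3 : HasDerivAt (fun x : ℝ => 2*b*x) (2*b) x := by
      simpa using (hasDerivAt_id x).const_mul (2*b)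
    have h4 : HasDerivAt (fun x : ℝ => Real.cos (2*b*x)) (-Real.sin (2*b*x) * (2*b)) x := h3.cos
    have := (h2.fun_mul h4).fun_neg
    exact this.congr_deriv (by ring)
  have hint : IntegrableOn (fun x => Real.exp (-x^2) * (Real.cos (2*b*x) * (2*x))
      + 2*b * (Real.exp (-x^2) * Real.sin (2*b*x))) (Ioi (0:ℝ)) :=
    (intXcos b).add ((intH b).const_mul (2*b))
  have htend : Tendsto (fun x => -(Real.exp (-x^2) * Real.cos (2*b*x))) atTop (nhds 0) := by
    refine squeeze_zero_norm (a := fun x => Real.exp (-x^2)) ?_ ?_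
    · intro x
      rw [norm_neg, Real.norm_eq_abs, abs_mul, abs_of_pos (Real.exp_pos _)]
      exact mul_le_of_le_one_right (Real.exp_pos _).le (abs_cos_le_one _)
    · have : Tendsto (fun x : ℝ => -x^2) atTop atBot := by
        simpa using (tendsto_pow_atTop (n := 2) (by norm_num)).neg_const_mul_atTop (r := -1) (by norm_num)
      exact Real.tendsto_exp_atBot.comp this
  have := integral_Ioi_of_hasDerivAt_of_tendsto' hderiv hint htend
  simpa using this

lemma H_deriv_eq (b : ℝ) : HasDerivAt Hfun (1 - 2*b*Hfun b) b := by
  have h := H_hasDeriv b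
  have : (∫ x in Ioi (0:ℝ), Real.exp (-x^2) * (Real.cos (2*b*x) * (2*x))) = 1 - 2*b*Hfun b := by
    have hsplit := integral_add (μ := volume.restrict (Ioi (0:ℝ))) (intXcos b) ((intH b).const_mul (2*b))
    have h2b : (∫ x in Ioi (0:ℝ), 2*b * (Real.exp (-x^2) * Real.sin (2*b*x))) = 2*b * Hfun b := by
      
        have := integral_const_mul (μ := volume.restrict (Ioi (0:ℝ))) (2*b)
          (fun x => Real.exp (-x^2) * Real.sin (2*b*x))
        simpa [Hfun] using this
    rw [parts b, h2b] at hsplit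
    linarith
  rwa [this] at h

lemma dawson_deriv (b : ℝ) : HasDerivAt dawson (1 - 2*b*dawson b) b := by
  have hc : Continuous (fun t : ℝ => Real.exp (t^2)) := by continuity
  have h1 : HasDerivAt (fun z => ∫ t in (0:ℝ)..z, Real.exp (t ^ 2)) (Real.exp (b^2)) b := by
    refine intervalIntegral.integral_hasDerivAt_right (hc.intervalIntegrable _ _)
      (hc.stronglyMeasurableAtFilter _ _) hc.continuousAt
  have h2 : HasDerivAt (fun z : ℝ => Real.exp (-z^2)) (Real.exp (-b^2) * (-(2*b))) b := by
    have : HasDerivAt (fun z : ℝ => -z^2) (-(2*b)) b := by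
      simpa using (hasDerivAt_pow 2 b).fun_neg
    exact this.exp
  have := h2.mul h1
  have e : Real.exp (-b^2) * (-(2*b)) * (∫ t in (0:ℝ)..b, Real.exp (t ^ 2))
      + Real.exp (-b^2) * Real.exp (b^2) = 1 - 2*b*dawson b := by
    rw [← Real.exp_add]
    simp [dawson]
    ring
  rw [e] at this
  exact this

lemma H_eq_dawson (b : ℝ) : Hfun b = dawson b := by
  set g : ℝ → ℝ := fun b => (Hfun b - dawson b) * Real.exp (b^2) with hg
  have hgd : ∀ c : ℝ, HasDerivAt g 0 c := by
    intro c
    have h1 := (H_deriv_eq c).fun_sub (dawson_deriv c)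
    have h2 : HasDerivAt (fun b : ℝ => Real.exp (b^2)) (Real.exp (c^2) * (2*c)) c := by
      have : HasDerivAt (fun b : ℝ => b^2) (2*c) c := by simpa using hasDerivAt_pow 2 c
      exact this.exp
    have := h1.fun_mul h2
    exact this.congr_deriv (by ring)
  have hconst : g (0:ℝ) = g b :=
    is_const_of_deriv_eq_zero (fun x => (hgd x).differentiableAt) (fun x => (hgd x).deriv) 0 b
  have hH0 : Hfun 0 = 0 := by
    simp [Hfun]
  have hd0 : dawson 0 = 0 := by simp [dawson]
  have : (Hfun b - dawson b) * Real.exp (b^2) = 0 := by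
    show g b = 0
    rw [← hconst]; simp [g, hH0, hd0]
  have hexp : Real.exp (b^2) ≠ 0 := (Real.exp_pos _).ne'
  have := mul_eq_zero.mp this
  rcases this with h | h
  · linarith [sub_eq_zero.mp h]
  · exact absurd h hexp

lemma measurable_sign' : Measurable Real.sign := by
  unfold Real.sign
  exact Measurable.ite (measurableSet_lt measurable_id measurable_const) measurable_const
    (Measurable.ite (measurableSet_lt measurable_const measurable_id) measurable_const
      measurable_const)

section main
variable (a : ℝ) (ha : 0 < a) (ω : ℝ)

lemma hint_main (a : ℝ) (ha : 0 < a) (ω : ℝ) :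
    Integrable (fun x : ℝ => ((Real.sign x * Real.exp (-a * x ^ 2 / 2) : ℝ) : ℂ) *
      Complex.exp (((-(2 * π * ω * x) : ℝ) : ℂ) * Complex.I)) := by
  have hb : (0:ℝ) < a/2 := by linarith
  have hg : Integrable (fun x : ℝ => Real.exp (-(a/2) * x^2)) := integrable_exp_neg_mul_sq hb
  refine (hg.mono' ?_ ?_)
  · apply Measurable.aestronglyMeasurable
    exact (Complex.measurable_ofReal.comp
        (measurable_sign'.mul (by fun_prop))).mul (by fun_prop)
  · filter_upwards with x
    rw [norm_mul, Complex.norm_exp_ofReal_mul_I,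
      mul_one, Complex.norm_real, Real.norm_eq_abs, abs_mul, abs_of_pos (Real.exp_pos _)]
    have h1 : |Real.sign x| ≤ 1 := by
      rcases Real.sign_apply_eq x with h | h | h <;> simp [h]
    have h2 : -a * x^2/2 = -(a/2)*x^2 := by ring
    rw [h2]
    exact mul_le_of_le_one_left (Real.exp_pos _).le h1

lemma odd_part (a : ℝ) (ω : ℝ) (hi : Integrable (fun x : ℝ =>
      Real.sign x * Real.exp (-a * x ^ 2 / 2) * Real.cos (2 * π * ω * x))) :
    ∫ x : ℝ, Real.sign x * Real.exp (-a * x ^ 2 / 2) * Real.cos (2 * π * ω * x) = 0 := by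
  set c : ℝ → ℝ := fun x => Real.sign x * Real.exp (-a * x ^ 2 / 2) * Real.cos (2 * π * ω * x)
    with hc
  have hodd : ∀ x, c (-x) = -c x := by
    intro x
    simp only [c, Real.sign_neg, neg_mul, mul_neg, neg_neg, mul_comm]
    rw [Real.cos_neg]
    ring_nf
  have hsplit : ∫ x : ℝ, c x = (∫ x in Iic (0:ℝ), c x) + ∫ x in Ioi (0:ℝ), c x :=
    (intervalIntegral.integral_Iic_add_Ioi hi.integrableOn hi.integrableOn).symm
  have h2 : ∫ x in Iic (0:ℝ), c (-x) = ∫ x in Ioi (0:ℝ), c x := by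
    simpa using integral_comp_neg_Iic (0:ℝ) c
  have h3 : ∫ x in Iic (0:ℝ), c (-x) = -∫ x in Iic (0:ℝ), c x := by
    simp_rw [hodd]
    exact integral_neg _
  rw [h3] at h2
  rw [hsplit, ← h2]
  ring

end main

lemma even_part (a : ℝ) (ω : ℝ) :
    ∫ x : ℝ, Real.sign x * Real.exp (-a * x ^ 2 / 2) * Real.sin (2 * π * ω * x)
      = 2 * ∫ x in Ioi (0:ℝ), Real.exp (-a * x ^ 2 / 2) * Real.sin (2 * π * ω * x) := by
  have key : ∀ x : ℝ, Real.sign x * Real.exp (-a * x ^ 2 / 2) * Real.sin (2 * π * ω * x)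
      = (fun u => Real.exp (-a * u ^ 2 / 2) * Real.sin (2 * π * ω * u)) |x| := by
    intro x
    rcases lt_trichotomy x 0 with h | h | h
    · simp only [Real.sign_of_neg h, abs_of_neg h]
      rw [show 2 * π * ω * -x = -(2 * π * ω * x) by ring, Real.sin_neg]
      ring_nf
    · simp [h]
    · simp only [Real.sign_of_pos h, abs_of_pos h]
      ring
  simp_rw [key]
  exact integral_comp_abs (f := fun u => Real.exp (-a * u ^ 2 / 2) * Real.sin (2 * π * ω * u))

lemma subst_part (a : ℝ) (ha : 0 < a) (ω : ℝ) :
    ∫ x in Ioi (0:ℝ), Real.exp (-a * x ^ 2 / 2) * Real.sin (2 * π * ω * x)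
      = Real.sqrt (2/a) * dawson (Real.sqrt 2 * π * ω / Real.sqrt a) := by
  set k := Real.sqrt (a/2) with hk
  have hk0 : 0 < k := Real.sqrt_pos.mpr (by linarith)
  have hka : k ^ 2 = a / 2 := Real.sq_sqrt (by linarith)
  set z := Real.sqrt 2 * π * ω / Real.sqrt a with hz
  have ha2 : (0:ℝ) < Real.sqrt a := Real.sqrt_pos.mpr ha
  have h2 : (0:ℝ) < Real.sqrt 2 := Real.sqrt_pos.mpr (by norm_num)
  have hksqrt : k = Real.sqrt a / Real.sqrt 2 := by
    rw [hk, Real.sqrt_div ha.le]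
  have hkz : z * k = π * ω := by
    rw [hz, hksqrt]
    field_simp
  have hfun : ∀ x : ℝ, Real.exp (-a * x ^ 2 / 2) * Real.sin (2 * π * ω * x)
      = (fun u => Real.exp (-u^2) * Real.sin (2*z*u)) (k * x) := by
    intro x
    simp only
    congr 1
    · congr 1
      rw [mul_pow, hka]
      ring
    · congr 1
      rw [show (2:ℝ)*z*(k*x) = 2*(z*k)*x by ring, hkz]
      ring
  simp_rw [hfun]
  rw [integral_comp_mul_left_Ioi (fun u => Real.exp (-u^2) * Real.sin (2*z*u)) 0 hk0,
    mul_zero, smul_eq_mul]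
  have hH : (∫ x in Ioi (0:ℝ), Real.exp (-x^2) * Real.sin (2*z*x)) = dawson z := H_eq_dawson z
  rw [hH]
  congr 1
  rw [hk, ← Real.sqrt_inv]
  congr 1
  rw [inv_div]

theorem stmt_19 (a : ℝ) (ha : 0 < a) (ω : ℝ) :
    (∫ x : ℝ, ((Real.sign x * Real.exp (-a * x ^ 2 / 2) : ℝ) : ℂ) *
        Complex.exp (((-(2 * π * ω * x) : ℝ) : ℂ) * Complex.I)
      = -2 * Complex.I * ((Real.sqrt (2 / a) : ℝ) : ℂ) *
          ((dawson (Real.sqrt 2 * π * ω / Real.sqrt a) : ℝ) : ℂ)) ∧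
    (∫ x : ℝ, ((Real.sign x * Real.exp (-a * x ^ 2 / 2) : ℝ) : ℂ) *
        Complex.exp (((-(2 * π * ω * x) : ℝ) : ℂ) * Complex.I)
      = -2 * Complex.I * ((Real.sqrt (2 / a) : ℝ) : ℂ) *
          ((Real.exp (-2 * π ^ 2 * ω ^ 2 / a) : ℝ) : ℂ) *
          (((∫ t in (0:ℝ)..(Real.sqrt 2 * π * ω / Real.sqrt a), Real.exp (t ^ 2)) : ℝ) : ℂ)) := by
  set z := Real.sqrt 2 * π * ω / Real.sqrt a with hz
  set f : ℝ → ℂ := fun x => ((Real.sign x * Real.exp (-a * x ^ 2 / 2) : ℝ) : ℂ) *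
    Complex.exp (((-(2 * π * ω * x) : ℝ) : ℂ) * Complex.I) with hf
  have hfi : Integrable f := hint_main a ha ω
  have hre : ∀ x, (f x).re = Real.sign x * Real.exp (-a * x ^ 2 / 2) * Real.cos (2 * π * ω * x) := by
    intro x
    rw [hf]
    simp only [Complex.re_ofReal_mul, Complex.exp_ofReal_mul_I_re]
    rw [Real.cos_neg]
  have him : ∀ x, (f x).im
      = -(Real.sign x * Real.exp (-a * x ^ 2 / 2) * Real.sin (2 * π * ω * x)) := by
    intro x
    rw [hf]
    simp only [Complex.im_ofReal_mul, Complex.exp_ofReal_mul_I_im]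
    rw [Real.sin_neg]
    ring
  have hre_int : Integrable (fun x : ℝ =>
      Real.sign x * Real.exp (-a * x ^ 2 / 2) * Real.cos (2 * π * ω * x)) := by
    have h := hfi.re
    simp only [RCLike.re_to_complex] at h
    convert h using 1
    ext x
    rw [hre]
  have hreval : ∫ x : ℝ, (f x).re = 0 := by
    simp_rw [hre]
    exact odd_part a ω hre_int
  have himval : ∫ x : ℝ, (f x).im = -(2 * (Real.sqrt (2/a) * dawson z)) := by
    simp_rw [him]
    rw [integral_neg, even_part a ω, subst_part a ha ω]
  have h1 := integral_coe_re_add_coe_im (𝕜 := ℂ) hfi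
  simp only [RCLike.re_to_complex, RCLike.im_to_complex, RCLike.I_to_complex,
    integral_ofReal] at h1
  rw [hreval, himval] at h1
  have hmain : ∫ x : ℝ, f x
      = -2 * Complex.I * ((Real.sqrt (2 / a) : ℝ) : ℂ) * ((dawson z : ℝ) : ℂ) := by
    rw [← h1]
    have : ((0:ℝ) : ℂ) + ((-(2 * (Real.sqrt (2/a) * dawson z)) : ℝ) : ℂ) * Complex.I
        = -2 * Complex.I * ((Real.sqrt (2 / a) : ℝ) : ℂ) * ((dawson z : ℝ) : ℂ) := by
      push_cast
      ring
    exact this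
  constructor
  · exact hmain
  · rw [hmain]
    have hz2 : -z^2 = -2 * π^2 * ω^2 / a := by
      rw [hz, div_pow, mul_pow, mul_pow, Real.sq_sqrt (by norm_num : (0:ℝ) ≤ 2),
        Real.sq_sqrt ha.le]
      ring
    rw [show dawson z = Real.exp (-z ^ 2) * ∫ t in (0:ℝ)..z, Real.exp (t ^ 2) from rfl, hz2]
    push_cast
    ring
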